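/- Let 0 < ε ≤ 2/(nL(2C+1)) for some C > 0, and suppose the sequences {x^k}, {x̃^k}, {d^k}, {α^k} are generated by the AS-SIMPLEX scheme: x^0 ∈ Δ; at each k with x^k non-stationary, A^k = A(x^k), N^k = N(x^k), j is chosen in N^k ∩ J(x^k), x̃^k is defined by x̃^k_i = 0 for i ∈ A^k, x̃^k_i = x^k_i for i ∈ N^k \ {j}, x̃^k_j = x^k_j + Σ_{h∈A^k} x^k_h; d^k is a feasible direction at x̃^k with d^k_{A^k} = 0 belonging to an active-set gradient related sequence (i.e., for any subsequence K with N(x^k) = N̂ fixed and x^k → x* with x* non-stationary in Δ_{N̂}: {d^k}_K is bounded, limsup_{k∈K} ∇f(x̃^k)ᵀd^k < 0, and liminf_{k∈K} α^k_max ≥ M > 0, where α^k_max is the maximum feasible stepsize along d^k from x̃^k); if ∇f(x̃^k)ᵀd^k < 0 then α^k ∈ (0, α^k_max] is computed by the Armijo line search with parameters δ, γ ∈ (0,1) (α^k is the largest stepsize of the form δ^m α^k_max, m ≥ 0, satisfying f(x̃^k + α d^k) ≤ f(x̃^k) + γ α ∇f(x̃^k)ᵀd^k), otherwise α^k = 0;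 and x^{k+1} = x̃^k + α^k d^k. Then either some x^k̄ is a stationary point of min_{x∈Δ} f(x), or the sequence {x^k} is infinite and every limit point of {x^k} is a stationary point of min_{x∈Δ} f(x). -/

import Mathlib

open scoped BigOperators Topology Classical

noncomputable section

/-- The unit simplex in `ℝⁿ`. -/
def unitSimplex (n : ℕ) : Set (EuclideanSpace ℝ (Fin n)) :=
  {x | (∑ i, x i) = 1 ∧ ∀ i, 0 ≤ x i}

/-- The face `Δ_I = {x ∈ Δ : xᵢ = 0 ∀ i ∉ I}` of the unit simplex. -/
def simplexFace (n : ℕ) (I : Set (Fin n)) : Set (EuclideanSpace ℝ (Fin n)) :=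
  {x | x ∈ unitSimplex n ∧ ∀ i ∉ I, x i = 0}

/-- A point of the unit simplex is stationary for `min_{x ∈ Δ} f(x)` if the KKT
conditions hold. -/
def IsStationaryPt {n : ℕ} (f : EuclideanSpace ℝ (Fin n) → ℝ)
    (x : EuclideanSpace ℝ (Fin n)) : Prop :=
  x ∈ unitSimplex n ∧
    ∃ (lam : ℝ) (mu : Fin n → ℝ),
      (∀ i, gradient f x i - lam - mu i = 0) ∧
      (∑ i, mu i * x i) = 0 ∧
      (∀ i, 0 ≤ mu i)

/-- The active-set estimate `A(x) = {i : xᵢ ≤ ε ∇f(x)ᵀ(eᵢ - x)}`, as a finset. -/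
def activeFinset {n : ℕ} (f : EuclideanSpace ℝ (Fin n) → ℝ) (eps : ℝ)
    (x : EuclideanSpace ℝ (Fin n)) : Finset (Fin n) :=
  Finset.univ.filter
    (fun i => x i ≤ eps * ∑ j, gradient f x j * (EuclideanSpace.single i (1 : ℝ) j - x j))

/-- The nonactive-set estimate `N(x) = {i : xᵢ > ε ∇f(x)ᵀ(eᵢ - x)}`. -/
def nonactiveEstimate {n : ℕ} (f : EuclideanSpace ℝ (Fin n) → ℝ) (eps : ℝ)
    (x : EuclideanSpace ℝ (Fin n)) : Set (Fin n) :=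
  {i | eps * ∑ j, gradient f x j * (EuclideanSpace.single i (1 : ℝ) j - x j) < x i}

section Aux
variable {n : ℕ} {f : EuclideanSpace ℝ (Fin n) → ℝ}

lemma isCompact_unitSimplex : IsCompact (unitSimplex n) := by
  have h : unitSimplex n =
      (EuclideanSpace.equiv (Fin n) ℝ : EuclideanSpace ℝ (Fin n) ≃L[ℝ] (Fin n → ℝ)) ⁻¹'
        stdSimplex ℝ (Fin n) := by
    ext x
    simp only [unitSimplex, stdSimplex, Set.mem_setOf_eq, Set.mem_preimage]
    constructor
    · rintro ⟨h1, h2⟩; exact ⟨h2, h1⟩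
    · rintro ⟨h2, h1⟩; exact ⟨h1, h2⟩
  rw [h]
  exact ((EuclideanSpace.equiv (Fin n) ℝ).toHomeomorph.isCompact_preimage).2
    (isCompact_stdSimplex ℝ (Fin n))

lemma isClosed_unitSimplex : IsClosed (unitSimplex n) := isCompact_unitSimplex.isClosed

lemma fderiv_eq_sum_grad (y v : EuclideanSpace ℝ (Fin n)) :
    (fderiv ℝ f y) v = ∑ j, gradient f y j * v j := by
  have h1 : (∑ j, gradient f y j * v j) = @inner ℝ _ _ (gradient f y) v := by
    rw [PiLp.inner_apply]
    simp [RCLike.inner_apply]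
    exact Finset.sum_congr rfl fun _ _ => mul_comm _ _
  rw [h1]
  have : gradient f y = (InnerProductSpace.toDual ℝ _).symm (fderiv ℝ f y) := rfl
  rw [this, InnerProductSpace.toDual_symm_apply]

lemma hasDerivAt_line (hf : ContDiff ℝ 1 f) (p v : EuclideanSpace ℝ (Fin n)) (t : ℝ) :
    HasDerivAt (fun s : ℝ => f (p + s • v)) ((fderiv ℝ f (p + t • v)) v) t := by
  have hline : HasDerivAt (fun s : ℝ => p + s • v) v t := by
    simpa using ((hasDerivAt_id t).smul_const v).const_add p
  have hfd : HasFDerivAt f (fderiv ℝ f (p + t • v)) (p + t • v) :=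
    (hf.differentiable one_ne_zero).differentiableAt.hasFDerivAt
  exact hfd.comp_hasDerivAt t hline

end Aux

section Descent
variable {n : ℕ} {f : EuclideanSpace ℝ (Fin n) → ℝ}

lemma fderiv_eq_inner_grad (y v : EuclideanSpace ℝ (Fin n)) :
    (fderiv ℝ f y) v = @inner ℝ _ _ (gradient f y) v := by
  rw [fderiv_eq_sum_grad, PiLp.inner_apply]
  simp [RCLike.inner_apply]
  exact Finset.sum_congr rfl fun _ _ => mul_comm _ _

lemma seg_mem_unitSimplex {p q : EuclideanSpace ℝ (Fin n)}
    (hp : p ∈ unitSimplex n) (hq : q ∈ unitSimplex n) {t : ℝ} (ht : t ∈ Set.Icc (0:ℝ) 1) :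
    p + t • (q - p) ∈ unitSimplex n := by
  obtain ⟨hps, hpn⟩ := hp
  obtain ⟨hqs, hqn⟩ := hq
  constructor
  · have : ∀ i, (p + t • (q - p)) i = p i + t * (q i - p i) := by
      intro i; simp [PiLp.add_apply, PiLp.smul_apply, PiLp.sub_apply, smul_eq_mul]
    simp_rw [this, Finset.sum_add_distrib, ← Finset.mul_sum, Finset.sum_sub_distrib, hps, hqs]
    ring
  · intro i
    have hi : (p + t • (q - p)) i = (1 - t) * p i + t * q i := by
      simp [PiLp.add_apply, PiLp.smul_apply, PiLp.sub_apply, smul_eq_mul]; ring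
    rw [hi]
    exact add_nonneg (mul_nonneg (by linarith [ht.2]) (hpn i)) (mul_nonneg ht.1 (hqn i))

lemma descent_lemma (hf : ContDiff ℝ 1 f) {L : ℝ} (hL0 : 0 ≤ L)
    (hLip : ∀ a ∈ unitSimplex n, ∀ b ∈ unitSimplex n,
      ‖gradient f a - gradient f b‖ ≤ L * ‖a - b‖)
    {p q : EuclideanSpace ℝ (Fin n)} (hp : p ∈ unitSimplex n) (hq : q ∈ unitSimplex n) :
    f q ≤ f p + (∑ j, gradient f p j * (q j - p j)) + L / 2 * ‖q - p‖ ^ 2 := by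
  set v : EuclideanSpace ℝ (Fin n) := q - p with hv
  set I : ℝ := (fderiv ℝ f p) v with hI
  set G : ℝ → ℝ := fun t => f p + t * I + t ^ 2 * (L / 2 * ‖v‖ ^ 2) - f (p + t • v) with hG
  have hGd : ∀ t : ℝ, HasDerivAt G
      (I + 2 * t * (L / 2 * ‖v‖ ^ 2) - (fderiv ℝ f (p + t • v)) v) t := by
    intro t
    have h1 : HasDerivAt (fun t : ℝ => f p + t * I + t ^ 2 * (L / 2 * ‖v‖ ^ 2))
        (I + 2 * t * (L / 2 * ‖v‖ ^ 2)) t := by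
      have ha : HasDerivAt (fun t : ℝ => t * I) I t := by
        simpa using (hasDerivAt_id t).mul_const I
      have hb : HasDerivAt (fun t : ℝ => t ^ 2 * (L / 2 * ‖v‖ ^ 2))
          ((2 * t) * (L / 2 * ‖v‖ ^ 2)) t := by
        have := (hasDerivAt_pow 2 t).mul_const (L / 2 * ‖v‖ ^ 2)
        simpa using this
      exact ((ha.const_add (f p)).add hb)
    exact h1.sub (hasDerivAt_line hf p v t)
  have hmono : MonotoneOn G (Set.Icc (0:ℝ) 1) := by
    apply monotoneOn_of_deriv_nonneg (convex_Icc 0 1)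
    · exact fun t _ => ((hGd t).differentiableAt).continuousAt.continuousWithinAt
    · exact fun t _ => ((hGd t).differentiableAt).differentiableWithinAt
    · intro t ht
      rw [interior_Icc] at ht
      rw [(hGd t).deriv]
      have hseg : p + t • v ∈ unitSimplex n :=
        seg_mem_unitSimplex hp hq ⟨le_of_lt ht.1, le_of_lt ht.2⟩
      have hlip := hLip (p + t • v) hseg p hp
      have hnorm : ‖p + t • v - p‖ = t * ‖v‖ := by
        rw [add_sub_cancel_left, norm_smul, Real.norm_eq_abs, abs_of_pos ht.1]
      have hib : (fderiv ℝ f (p + t • v)) v - I ≤ L * t * ‖v‖ ^ 2 := by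
        rw [fderiv_eq_inner_grad, hI, fderiv_eq_inner_grad, ← inner_sub_left]
        calc @inner ℝ _ _ (gradient f (p + t • v) - gradient f p) v
            ≤ ‖gradient f (p + t • v) - gradient f p‖ * ‖v‖ := real_inner_le_norm _ _
          _ ≤ (L * (t * ‖v‖)) * ‖v‖ := by
              apply mul_le_mul_of_nonneg_right _ (norm_nonneg v)
              rw [← hnorm]; exact hlip.trans_eq (by rw [hnorm])
          _ = L * t * ‖v‖ ^ 2 := by ring
      nlinarith [hib]
  have h01 := hmono (Set.left_mem_Icc.2 zero_le_one) (Set.right_mem_Icc.2 zero_le_one) zero_le_one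
  have hG0 : G 0 = 0 := by simp [hG]
  have hG1 : G 1 = f p + I + L / 2 * ‖v‖ ^ 2 - f q := by
    simp [hG, hv]
  rw [hG0, hG1] at h01
  have hIs : I = ∑ j, gradient f p j * (q j - p j) := by
    rw [hI, fderiv_eq_sum_grad]
    exact Finset.sum_congr rfl fun j _ => by rw [hv, PiLp.sub_apply]
  linarith [h01, hIs ▸ h01]
end Descent


section P2
variable {n : ℕ}

lemma sum_split {A : Finset (Fin n)} {j : Fin n} (hj : j ∉ A) (a : ℝ) (g : Fin n → ℝ) :
    ∑ i, (if i = j then a else if i ∈ A then g i else 0) = a + ∑ h ∈ A, g h := by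
  rw [← Finset.add_sum_erase _ _ (Finset.mem_univ j), if_pos rfl]
  congr 1
  rw [Finset.sum_congr rfl (fun i hi => if_neg (Finset.ne_of_mem_erase hi)),
    Finset.sum_ite_mem]
  congr 1
  rw [Finset.inter_eq_right]
  intro a ha
  exact Finset.mem_erase.2 ⟨fun h => hj (h ▸ ha), Finset.mem_univ a⟩
end P2

section P3
variable {n : ℕ} {f : EuclideanSpace ℝ (Fin n) → ℝ}

lemma single_sum (x : EuclideanSpace ℝ (Fin n)) (i : Fin n) :
    (∑ j, gradient f x j * (EuclideanSpace.single i (1:ℝ) j - x j)) =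
      gradient f x i - ∑ k, gradient f x k * x k := by
  simp_rw [mul_sub, Finset.sum_sub_distrib, EuclideanSpace.single_apply, mul_ite, mul_one,
    mul_zero]
  rw [Finset.sum_ite_eq' Finset.univ i (fun j => gradient f x j), if_pos (Finset.mem_univ i)]

lemma mem_active_iff {eps : ℝ} {x : EuclideanSpace ℝ (Fin n)} {i : Fin n} :
    i ∈ activeFinset f eps x ↔
      x i ≤ eps * (gradient f x i - ∑ k, gradient f x k * x k) := by
  rw [activeFinset, Finset.mem_filter, single_sum]
  simp

lemma mem_nonactive_iff {eps : ℝ} {x : EuclideanSpace ℝ (Fin n)} {i : Fin n} :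
    i ∈ nonactiveEstimate f eps x ↔
      eps * (gradient f x i - ∑ k, gradient f x k * x k) < x i := by
  rw [nonactiveEstimate, Set.mem_setOf_eq, single_sum]

lemma xt_mem_and_descent (hf : ContDiff ℝ 1 f) {L eps : ℝ} (hL0 : 0 ≤ L)
    (hLip : ∀ a ∈ unitSimplex n, ∀ b ∈ unitSimplex n,
      ‖gradient f a - gradient f b‖ ≤ L * ‖a - b‖)
    (heps : 0 < eps) (hepsn : (n : ℝ) * L / 2 ≤ 1 / eps)
    {x : EuclideanSpace ℝ (Fin n)} (hx : x ∈ unitSimplex n) {j : Fin n}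
    (hjN : j ∈ nonactiveEstimate f eps x)
    (hjmin : ∀ i, gradient f x j ≤ gradient f x i)
    (xtv : EuclideanSpace ℝ (Fin n))
    (hxtv : xtv = fun i => if i = j then x j + ∑ h ∈ activeFinset f eps x, x h
      else if i ∈ activeFinset f eps x then 0 else x i) :
    xtv ∈ unitSimplex n ∧ f xtv ≤ f x := by
  set A := activeFinset f eps x with hA
  set S : ℝ := ∑ h ∈ A, x h with hS
  set Q : ℝ := ∑ h ∈ A, (x h) ^ 2 with hQ
  obtain ⟨hxs, hxn⟩ := hx
  have hjA : j ∉ A := by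
    rw [hA, mem_active_iff]
    rw [mem_nonactive_iff] at hjN
    exact not_le.2 hjN
  have hcoord : ∀ i, xtv i = if i = j then x j + S
      else if i ∈ A then 0 else x i := fun i => by rw [hxtv]
  have hS0 : 0 ≤ S := Finset.sum_nonneg fun h _ => hxn h
  have hQ0 : 0 ≤ Q := Finset.sum_nonneg fun h _ => sq_nonneg _
  have hvdiff : ∀ i, xtv i - x i = if i = j then S else if i ∈ A then -x i else 0 := by
    intro i
    rw [hcoord i]
    rcases eq_or_ne i j with rfl | hij
    · simp
    · rw [if_neg hij, if_neg hij]
      by_cases hiA : i ∈ A <;> simp [hiA]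
  have hmem : xtv ∈ unitSimplex n := by
    constructor
    · have h1 : ∑ i, (xtv i - x i) = 0 := by
        calc ∑ i, (xtv i - x i)
            = ∑ i, (if i = j then S else if i ∈ A then -x i else 0) :=
              Finset.sum_congr rfl fun i _ => by rw [hvdiff i]
          _ = S + ∑ h ∈ A, -x h := sum_split hjA S _
          _ = 0 := by rw [Finset.sum_neg_distrib, ← hS]; ring
      have := Finset.sum_sub_distrib (f := fun i => xtv i) (g := fun i => x i)
        (s := Finset.univ)
      rw [this, hxs] at h1
      linarith
    · intro i
      rw [hcoord i]
      rcases eq_or_ne i j with rfl | hij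
      · rw [if_pos rfl]; exact add_nonneg (hxn i) hS0
      · rw [if_neg hij]
        by_cases hiA : i ∈ A
        · rw [if_pos hiA]
        · rw [if_neg hiA]; exact hxn i
  refine ⟨hmem, ?_⟩
  -- gradient inner product bound
  set T : ℝ := ∑ k, gradient f x k * x k with hT
  have hjT : gradient f x j ≤ T := by
    have h1 : ∑ k, gradient f x j * x k ≤ T :=
      Finset.sum_le_sum fun k _ => mul_le_mul_of_nonneg_right (hjmin k) (hxn k)
    rwa [← Finset.mul_sum, hxs, mul_one] at h1
  have hactb : ∀ h ∈ A, x h * (gradient f x j - gradient f x h) ≤ -(x h ^ 2 / eps) := by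
    intro h hh
    have hxh := (mem_active_iff.1 hh)
    rw [← hT] at hxh
    have h2 : gradient f x j - gradient f x h ≤ -(x h / eps) := by
      have h3 : x h / eps ≤ gradient f x h - T := (div_le_iff₀ heps).2 (by linarith)
      linarith [hjT]
    calc x h * (gradient f x j - gradient f x h) ≤ x h * (-(x h / eps)) :=
          mul_le_mul_of_nonneg_left h2 (hxn h)
      _ = -(x h ^ 2 / eps) := by ring
  have hT1 : ∑ i, gradient f x i * (xtv i - x i) ≤ -(Q / eps) := by
    have heq : ∑ i, gradient f x i * (xtv i - x i)
        = gradient f x j * S + ∑ h ∈ A, gradient f x h * (-x h) := by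
      calc ∑ i, gradient f x i * (xtv i - x i)
          = ∑ i, (if i = j then gradient f x j * S
              else if i ∈ A then gradient f x i * (-x i) else 0) := by
            refine Finset.sum_congr rfl fun i _ => ?_
            rw [hvdiff i]
            rcases eq_or_ne i j with rfl | hij
            · simp
            · rw [if_neg hij, if_neg hij]
              by_cases hiA : i ∈ A <;> simp [hiA]
        _ = _ := sum_split hjA _ _
    rw [heq, hS, Finset.mul_sum]
    have : ∑ h ∈ A, gradient f x j * x h + ∑ h ∈ A, gradient f x h * (-x h)
        = ∑ h ∈ A, x h * (gradient f x j - gradient f x h) := by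
      rw [← Finset.sum_add_distrib]
      exact Finset.sum_congr rfl fun h _ => by ring
    rw [this]
    calc ∑ h ∈ A, x h * (gradient f x j - gradient f x h)
        ≤ ∑ h ∈ A, -(x h ^ 2 / eps) := Finset.sum_le_sum hactb
      _ = -(Q / eps) := by rw [Finset.sum_neg_distrib, hQ, Finset.sum_div]
  have hT2 : ‖xtv - x‖ ^ 2 ≤ (n : ℝ) * Q := by
    have hnormsq : ‖xtv - x‖ ^ 2 = ∑ i, (xtv i - x i) ^ 2 := by
      rw [← real_inner_self_eq_norm_sq, PiLp.inner_apply]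
      refine Finset.sum_congr rfl fun i _ => ?_
      rw [PiLp.sub_apply]
      simp [RCLike.inner_apply, sq]
    have heq2 : ∑ i, (xtv i - x i) ^ 2 = S ^ 2 + Q := by
      calc ∑ i, (xtv i - x i) ^ 2
          = ∑ i, (if i = j then S ^ 2 else if i ∈ A then (x i) ^ 2 else 0) := by
            refine Finset.sum_congr rfl fun i _ => ?_
            rw [hvdiff i]
            rcases eq_or_ne i j with rfl | hij
            · simp
            · rw [if_neg hij, if_neg hij]
              by_cases hiA : i ∈ A <;> simp [hiA]
        _ = S ^ 2 + Q := sum_split hjA _ _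
    have hcard : (A.card : ℝ) ≤ (n : ℝ) - 1 := by
      have hsub : A ⊆ Finset.univ.erase j := fun a ha =>
        Finset.mem_erase.2 ⟨fun h => hjA (h ▸ ha), Finset.mem_univ a⟩
      have h1 : A.card ≤ n - 1 := by
        have := Finset.card_le_card hsub
        rwa [Finset.card_erase_of_mem (Finset.mem_univ j), Finset.card_univ,
          Fintype.card_fin] at this
      have hn1 : 1 ≤ n := Nat.one_le_iff_ne_zero.2 (by
        rintro rfl; exact absurd j.2 (Nat.not_lt_zero _))
      calc (A.card : ℝ) ≤ ((n - 1 : ℕ) : ℝ) := Nat.cast_le.2 h1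
        _ = (n : ℝ) - 1 := by rw [Nat.cast_sub hn1]; simp
    have hCS : S ^ 2 ≤ (A.card : ℝ) * Q := by
      have := sq_sum_le_card_mul_sum_sq (s := A) (f := fun h => x h)
      exact_mod_cast this
    rw [hnormsq, heq2]
    nlinarith [hQ0]
  have hdl := descent_lemma hf hL0 hLip ⟨hxs, hxn⟩ hmem
  have hsub : ∀ i, (xtv : EuclideanSpace ℝ (Fin n)) i - x i = xtv i - x i := fun _ => rfl
  have hgsum : (∑ i, gradient f x i * (xtv i - x i)) ≤ -(Q / eps) := hT1
  have hfinal : f xtv ≤ f x + (-(Q / eps)) + L / 2 * ((n : ℝ) * Q) := by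
    refine hdl.trans ?_
    have h1 : (∑ i, gradient f x i * (xtv i - x i)) + L / 2 * ‖xtv - x‖ ^ 2
        ≤ -(Q / eps) + L / 2 * ((n : ℝ) * Q) := by
      have h2 : L / 2 * ‖xtv - x‖ ^ 2 ≤ L / 2 * ((n : ℝ) * Q) :=
        mul_le_mul_of_nonneg_left hT2 (by linarith)
      linarith [hgsum]
    linarith
  have hkey : L / 2 * ((n : ℝ) * Q) ≤ Q / eps := by
    have : (n : ℝ) * L / 2 * Q ≤ (1 / eps) * Q := mul_le_mul_of_nonneg_right hepsn hQ0
    calc L / 2 * ((n : ℝ) * Q) = (n : ℝ) * L / 2 * Q := by ring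
      _ ≤ (1 / eps) * Q := this
      _ = Q / eps := by ring
  linarith
end P3


section P4
variable {n : ℕ}

lemma simplex_sum_add (xtv dv : EuclideanSpace ℝ (Fin n)) (c : ℝ) :
    ∑ i, (xtv + c • dv) i = (∑ i, xtv i) + c * ∑ i, dv i := by
  simp [PiLp.add_apply, PiLp.smul_apply, smul_eq_mul, Finset.sum_add_distrib, Finset.mul_sum]

lemma step_mem {xtv dv : EuclideanSpace ℝ (Fin n)} {a amax : ℝ}
    (hxtv : xtv ∈ unitSimplex n)
    (hmax : IsGreatest {a : ℝ | 0 ≤ a ∧ xtv + a • dv ∈ unitSimplex n} amax)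
    (ha : a = 0 ∨ a ∈ Set.Ioc 0 amax) : xtv + a • dv ∈ unitSimplex n := by
  rcases ha with rfl | ⟨ha0, ha1⟩
  · simpa using hxtv
  · obtain ⟨⟨hamax0, hmemmax⟩, _⟩ := hmax
    have hamaxpos : 0 < amax := lt_of_lt_of_le ha0 ha1
    have hsumd : ∑ i, dv i = 0 := by
      have h1 := hmemmax.1
      rw [simplex_sum_add, hxtv.1] at h1
      have : amax * ∑ i, dv i = 0 := by linarith
      exact (mul_eq_zero.1 this).resolve_left (ne_of_gt hamaxpos)
    constructor
    · rw [simplex_sum_add, hxtv.1, hsumd]; ring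
    · intro i
      set t : ℝ := a / amax with hts
      have ht0 : 0 ≤ t := div_nonneg ha0.le hamax0
      have ht1 : t ≤ 1 := (div_le_one hamaxpos).2 ha1
      have htam : t * amax = a := div_mul_cancel₀ a (ne_of_gt hamaxpos)
      have hco : (xtv + a • dv) i = (1 - t) * xtv i + t * ((xtv + amax • dv) i) := by
        simp only [PiLp.add_apply, PiLp.smul_apply, smul_eq_mul]
        have : t * (xtv i + amax * dv i) = t * xtv i + a * dv i := by
          rw [mul_add, ← mul_assoc, htam]
        rw [this]; ring
      rw [hco]
      exact add_nonneg (mul_nonneg (by linarith) (hxtv.2 i))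
        (mul_nonneg ht0 (hmemmax.2 i))
end P4

set_option maxHeartbeats 1000000 in
/-- Global convergence of the AS-SIMPLEX framework with active-set gradient related
directions and Armijo line search: either some iterate is stationary, or every limit
point of the sequence of iterates is a stationary point. -/
theorem as_simplex_global_convergence (n : ℕ)
    (f : EuclideanSpace ℝ (Fin n) → ℝ) (hf : ContDiff ℝ 1 f)
    (L C eps : ℝ) (hL : 0 < L) (hC : 0 < C)
    (hLip : ∀ a ∈ unitSimplex n, ∀ b ∈ unitSimplex n,
      ‖gradient f a - gradient f b‖ ≤ L * ‖a - b‖)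
    (heps : 0 < eps) (heps' : eps ≤ 2 / (n * L * (2 * C + 1)))
    (delta gamma : ℝ)
    (hdelta : delta ∈ Set.Ioo (0 : ℝ) 1) (hgamma : gamma ∈ Set.Ioo (0 : ℝ) 1)
    (x xt d : ℕ → EuclideanSpace ℝ (Fin n))
    (alpha alphamax : ℕ → ℝ) (jsel : ℕ → Fin n)
    (hx0 : x 0 ∈ unitSimplex n)
    -- at every iteration with `xᵏ` non-stationary, `j` is chosen in `Nᵏ ∩ J(xᵏ)`:
    (hjsel : ∀ k, ¬ IsStationaryPt f (x k) →
      jsel k ∈ nonactiveEstimate f eps (x k) ∧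
      ∀ i, gradient f (x k) (jsel k) ≤ gradient f (x k) i)
    -- definition of `x̃ᵏ`:
    (hxt : ∀ k, ¬ IsStationaryPt f (x k) →
      xt k = fun i => if i = jsel k then
          x k (jsel k) + ∑ h ∈ activeFinset f eps (x k), x k h
        else if i ∈ activeFinset f eps (x k) then 0 else x k i)
    -- `dᵏ` vanishes on the estimated active set:
    (hdA : ∀ k, ¬ IsStationaryPt f (x k) → ∀ i ∈ activeFinset f eps (x k), d k i = 0)
    -- `α^k_max` is the maximum feasible stepsize along `dᵏ` from `x̃ᵏ`:
    (hmax : ∀ k, ¬ IsStationaryPt f (x k) →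
      IsGreatest {a : ℝ | 0 ≤ a ∧ xt k + a • d k ∈ unitSimplex n} (alphamax k))
    -- the direction sequence is active-set gradient related:
    (hgradrel : ∀ φ : ℕ → ℕ, StrictMono φ →
      ∀ Nhat : Set (Fin n), (∀ k, nonactiveEstimate f eps (x (φ k)) = Nhat) →
      ∀ xstar, Filter.Tendsto (x ∘ φ) Filter.atTop (𝓝 xstar) →
      -- `x*` non-stationary in `Δ_N̂`:
      (∃ y ∈ simplexFace n Nhat, (∑ j, gradient f xstar j * (y j - xstar j)) < 0) →
      ((∃ B : ℝ, ∀ k, ‖d (φ k)‖ ≤ B) ∧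
       Filter.limsup (fun k => ∑ j, gradient f (xt (φ k)) j * d (φ k) j)
         Filter.atTop < 0 ∧
       ∃ M > (0 : ℝ), M ≤ Filter.liminf (fun k => alphamax (φ k)) Filter.atTop))
    -- Armijo line search if `∇f(x̃ᵏ)ᵀdᵏ < 0`, otherwise `αᵏ = 0`:
    (hls : ∀ k, ¬ IsStationaryPt f (x k) →
      (((∑ j, gradient f (xt k) j * d k j) < 0 →
        alpha k ∈ Set.Ioc (0 : ℝ) (alphamax k) ∧
        ∃ m : ℕ, alpha k = delta ^ m * alphamax k ∧
          f (xt k + alpha k • d k) ≤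
            f (xt k) + gamma * alpha k * ∑ j, gradient f (xt k) j * d k j ∧
          ∀ m' < m, ¬ (f (xt k + (delta ^ m' * alphamax k) • d k) ≤
            f (xt k) + gamma * (delta ^ m' * alphamax k) *
              ∑ j, gradient f (xt k) j * d k j)) ∧
       (¬ ((∑ j, gradient f (xt k) j * d k j) < 0) → alpha k = 0)))
    -- iterate update:
    (hstep : ∀ k, ¬ IsStationaryPt f (x k) → x (k + 1) = xt k + alpha k • d k) :
    (∃ kbar, IsStationaryPt f (x kbar)) ∨
    (∀ xstar : EuclideanSpace ℝ (Fin n),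
      (∃ φ : ℕ → ℕ, StrictMono φ ∧ Filter.Tendsto (x ∘ φ) Filter.atTop (𝓝 xstar)) →
      IsStationaryPt f xstar) := by
  classical
  by_cases hstat : ∃ kbar, IsStationaryPt f (x kbar)
  · exact Or.inl hstat
  right
  push_neg at hstat
  have hn : 0 < n := by
    by_contra h
    push_neg at h
    interval_cases n
    have := hx0.1
    simp at this
  have hL0 : (0:ℝ) ≤ L := hL.le
  have hepsn : (n : ℝ) * L / 2 ≤ 1 / eps := by
    have hnR : (0:ℝ) < n := by exact_mod_cast hn
    have hd : (0:ℝ) < (n:ℝ) * L := by positivity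
    have hd2 : (0:ℝ) < (n:ℝ) * L * (2 * C + 1) := by positivity
    have h1 : eps ≤ 2 / ((n:ℝ) * L) := by
      refine heps'.trans ?_
      apply div_le_div_of_nonneg_left (by norm_num) hd
      nlinarith
    rw [div_le_div_iff₀ (by norm_num) heps]
    rw [le_div_iff₀ hd] at h1
    nlinarith
  -- the basic per-iteration facts
  set gseq : ℕ → ℝ := fun k => ∑ j, gradient f (xt k) j * d k j with hgseq
  have halphacase : ∀ k, alpha k = 0 ∨ alpha k ∈ Set.Ioc 0 (alphamax k) := by
    intro k
    by_cases hg : gseq k < 0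
    · exact Or.inr ((hls k (hstat k)).1 hg).1
    · exact Or.inl ((hls k (hstat k)).2 hg)
  have hfeas : ∀ k, x k ∈ unitSimplex n := by
    intro k
    induction k with
    | zero => exact hx0
    | succ k ih =>
      obtain ⟨hjN, hjmin⟩ := hjsel k (hstat k)
      have hxtk := (xt_mem_and_descent hf hL0 hLip heps hepsn ih hjN hjmin (xt k)
        (hxt k (hstat k))).1
      rw [hstep k (hstat k)]
      exact step_mem hxtk (hmax k (hstat k)) (halphacase k)
  have hxtfeas : ∀ k, xt k ∈ unitSimplex n := fun k =>
    (xt_mem_and_descent hf hL0 hLip heps hepsn (hfeas k) (hjsel k (hstat k)).1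
      (hjsel k (hstat k)).2 (xt k) (hxt k (hstat k))).1
  have hfdxt : ∀ k, f (xt k) ≤ f (x k) := fun k =>
    (xt_mem_and_descent hf hL0 hLip heps hepsn (hfeas k) (hjsel k (hstat k)).1
      (hjsel k (hstat k)).2 (xt k) (hxt k (hstat k))).2
  have hdecr : ∀ k, f (x (k+1)) ≤ f (x k) + gamma * (alpha k * gseq k) ∧
      gamma * (alpha k * gseq k) ≤ 0 := by
    intro k
    by_cases hg : gseq k < 0
    · obtain ⟨⟨hα0, hα1⟩, m, hm, harm, hfail⟩ := (hls k (hstat k)).1 hg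
      constructor
      · rw [hstep k (hstat k)]
        calc f (xt k + alpha k • d k) ≤ f (xt k) + gamma * alpha k * gseq k := harm
          _ ≤ f (x k) + gamma * (alpha k * gseq k) := by
              have := hfdxt k; linarith [mul_assoc gamma (alpha k) (gseq k)]
      · have : gamma * (alpha k * gseq k) ≤ 0 := by
          apply mul_nonpos_of_nonneg_of_nonpos hgamma.1.le
          exact mul_nonpos_of_nonneg_of_nonpos hα0.le hg.le
        exact this
    · have hα := (hls k (hstat k)).2 hg
      constructor
      · rw [hstep k (hstat k), hα]
        simpa using (hfdxt k).trans (by simp [hα])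
      · simp [hα]
  -- f(x k) converges
  obtain ⟨z, hzmem, hzmin⟩ := isCompact_unitSimplex.exists_isMinOn ⟨x 0, hx0⟩
    hf.continuous.continuousOn
  have hanti : Antitone (fun k => f (x k)) := antitone_nat_of_succ_le fun k => by
    have := (hdecr k).1; have := (hdecr k).2; linarith
  have hbdd : BddBelow (Set.range fun k => f (x k)) := by
    refine ⟨f z, ?_⟩
    rintro v ⟨k, rfl⟩
    exact hzmin (hfeas k)
  have hfl : Filter.Tendsto (fun k => f (x k)) Filter.atTop (𝓝 (⨅ k, f (x k))) :=
    tendsto_atTop_ciInf hanti hbdd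
  have hdiff0 : Filter.Tendsto (fun k => f (x (k+1)) - f (x k)) Filter.atTop (𝓝 0) := by
    have h1 : Filter.Tendsto (fun k => f (x (k+1))) Filter.atTop (𝓝 (⨅ k, f (x k))) :=
      hfl.comp (Filter.tendsto_add_atTop_nat 1)
    simpa using h1.sub hfl
  have hgag : Filter.Tendsto (fun k => gamma * (alpha k * gseq k)) Filter.atTop (𝓝 0) := by
    apply tendsto_of_tendsto_of_tendsto_of_le_of_le hdiff0 tendsto_const_nhds
    · intro k; have := (hdecr k).1; simp only; linarith
    · intro k; exact (hdecr k).2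
  have hag : Filter.Tendsto (fun k => alpha k * gseq k) Filter.atTop (𝓝 0) := by
    have h1 := hgag.const_mul gamma⁻¹
    simp only [mul_zero] at h1
    refine h1.congr fun k => ?_
    rw [inv_mul_cancel_left₀ (ne_of_gt hgamma.1)]
  -- now the limit point argument
  intro xstar ⟨φ0, hφ0, hconv⟩
  by_contra hns
  -- pigeonhole: constant active set estimate and selected index
  set P : ℕ → Set (Fin n) × Fin n :=
    fun k => (nonactiveEstimate f eps (x (φ0 k)), jsel (φ0 k)) with hP
  obtain ⟨⟨Nhat, j0⟩, hfib⟩ := Finite.exists_infinite_fiber P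
  have hinf' : (setOf fun k => P k = (Nhat, j0)).Infinite := by
    have h0 := Set.infinite_coe_iff.1 hfib
    have : P ⁻¹' {(Nhat, j0)} = setOf fun k => P k = (Nhat, j0) := by
      ext k; simp; exact Iff.rfl
    rwa [this] at h0
  set χ : ℕ → ℕ := Nat.nth (fun k => P k = (Nhat, j0)) with hχ
  have hχmono : StrictMono χ := Nat.nth_strictMono hinf'
  have hχmem : ∀ k, P (χ k) = (Nhat, j0) := Nat.nth_mem_of_infinite hinf'
  set φ : ℕ → ℕ := φ0 ∘ χ with hφdef
  have hφ : StrictMono φ := hφ0.comp hχmono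
  have hNconst : ∀ k, nonactiveEstimate f eps (x (φ k)) = Nhat := fun k =>
    congrArg Prod.fst (hχmem k)
  have hjconst : ∀ k, jsel (φ k) = j0 := fun k => congrArg Prod.snd (hχmem k)
  have hconv' : Filter.Tendsto (x ∘ φ) Filter.atTop (𝓝 xstar) :=
    hconv.comp hχmono.tendsto_atTop
  have hxstarmem : xstar ∈ unitSimplex n :=
    isClosed_unitSimplex.mem_of_tendsto hconv'
      (Filter.Eventually.of_forall fun k => hfeas (φ k))
  -- gradient continuity
  have hgc : Continuous fun y : EuclideanSpace ℝ (Fin n) => gradient f y := by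
    have h1 : Continuous (fderiv ℝ f) := hf.continuous_fderiv one_ne_zero
    exact ((InnerProductSpace.toDual ℝ
      (EuclideanSpace ℝ (Fin n))).symm.continuous).comp h1
  have hgci : ∀ i : Fin n,
      Continuous fun y : EuclideanSpace ℝ (Fin n) => gradient f y i := fun i =>
    (EuclideanSpace.proj i).continuous.comp hgc
  -- j0 minimizes the gradient at xstar
  have hjmin_star : ∀ i, gradient f xstar j0 ≤ gradient f xstar i := by
    intro i
    have ha : Filter.Tendsto (fun k => gradient f (x (φ k)) j0) Filter.atTop
        (𝓝 (gradient f xstar j0)) := ((hgci j0).tendsto xstar).comp hconv'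
    have hb : Filter.Tendsto (fun k => gradient f (x (φ k)) i) Filter.atTop
        (𝓝 (gradient f xstar i)) := ((hgci i).tendsto xstar).comp hconv'
    refine le_of_tendsto_of_tendsto' ha hb fun k => ?_
    have := (hjsel (φ k) (hstat (φ k))).2 i
    rwa [hjconst k] at this
  -- xstar nonstationary implies strict descent from j0
  have hT' : gradient f xstar j0 < ∑ k, gradient f xstar k * xstar k := by
    by_contra hle
    push_neg at hle
    apply hns
    refine ⟨hxstarmem, gradient f xstar j0,
      fun i => gradient f xstar i - gradient f xstar j0, fun i => by ring, ?_,
      fun i => sub_nonneg.2 (hjmin_star i)⟩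
    show ∑ i, (gradient f xstar i - gradient f xstar j0) * xstar i = 0
    have hsum : ∑ i, (gradient f xstar i - gradient f xstar j0) * xstar i
        = (∑ i, gradient f xstar i * xstar i) - gradient f xstar j0 := by
      have h1 : ∀ i : Fin n, (gradient f xstar i - gradient f xstar j0) * xstar i
          = gradient f xstar i * xstar i - gradient f xstar j0 * xstar i := fun i => by ring
      simp_rw [h1]
      rw [Finset.sum_sub_distrib, ← Finset.mul_sum, hxstarmem.1, mul_one]
    rw [hsum]
    have hge : 0 ≤ ∑ i, (gradient f xstar i - gradient f xstar j0) * xstar i :=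
      Finset.sum_nonneg fun i _ =>
        mul_nonneg (by linarith [hjmin_star i]) (hxstarmem.2 i)
    rw [hsum] at hge
    linarith
  -- j0 ∈ Nhat and the face witness
  have hj0N : j0 ∈ Nhat := by
    have := (hjsel (φ 0) (hstat (φ 0))).1
    rwa [hjconst 0, hNconst 0] at this
  have hwit : ∃ y ∈ simplexFace n Nhat,
      (∑ j, gradient f xstar j * (y j - xstar j)) < 0 := by
    refine ⟨EuclideanSpace.single j0 (1:ℝ), ⟨⟨?_, ?_⟩, ?_⟩, ?_⟩
    · simp [EuclideanSpace.single_apply]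
    · intro i
      rw [EuclideanSpace.single_apply]
      split <;> norm_num
    · intro i hi
      rw [EuclideanSpace.single_apply, if_neg (fun h => hi (by rw [h]; exact hj0N))]
    · rw [single_sum xstar j0]
      linarith
  obtain ⟨⟨B, hB⟩, hlimsup, M, hM, hliminf⟩ :=
    hgradrel φ hφ Nhat hNconst xstar hconv' hwit
  -- bound on the gradient over the simplex
  obtain ⟨G, hG⟩ := isCompact_unitSimplex.exists_bound_of_continuousOn
    (hgc.continuousOn : ContinuousOn (fun y => gradient f y) (unitSimplex n))
  set gφ : ℕ → ℝ := fun k => ∑ j, gradient f (xt (φ k)) j * d (φ k) j with hgφ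
  have hginner : ∀ k, gφ k = @inner ℝ _ _ (gradient f (xt (φ k))) (d (φ k)) := by
    intro k
    rw [PiLp.inner_apply]
    simp [RCLike.inner_apply]
    exact Finset.sum_congr rfl fun _ _ => mul_comm _ _
  have hB0 : (0:ℝ) ≤ B := (norm_nonneg _).trans (hB 0)
  have hG0 : (0:ℝ) ≤ G := (norm_nonneg _).trans (hG (x 0) hx0)
  have hgbdd : Filter.IsBoundedUnder (· ≤ ·) Filter.atTop gφ := by
    refine Filter.isBoundedUnder_of ⟨G * B, fun k => ?_⟩
    rw [hginner k]
    calc @inner ℝ _ _ (gradient f (xt (φ k))) (d (φ k))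
        ≤ ‖gradient f (xt (φ k))‖ * ‖d (φ k)‖ := real_inner_le_norm _ _
      _ ≤ G * B := mul_le_mul (hG _ (hxtfeas (φ k))) (hB k) (norm_nonneg _) hG0
  set b : ℝ := Filter.limsup gφ Filter.atTop / 2 with hbdef
  have hb : b < 0 := by rw [hbdef]; linarith [hlimsup]
  have hlsb : Filter.limsup gφ Filter.atTop < b := by rw [hbdef]; linarith [hlimsup]
  have hevg : ∀ᶠ k in Filter.atTop, gφ k < b :=
    Filter.eventually_lt_of_limsup_lt hlsb hgbdd
  have hamax_nonneg : ∀ k, 0 ≤ alphamax k := fun k => (hmax k (hstat k)).1.1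
  have heva : ∀ᶠ k in Filter.atTop, M / 2 < alphamax (φ k) :=
    Filter.eventually_lt_of_lt_liminf (by linarith)
      (Filter.isBoundedUnder_of ⟨0, fun k => hamax_nonneg (φ k)⟩)
  have halpha_nonneg : ∀ k, 0 ≤ alpha k := fun k => by
    rcases halphacase k with h | h
    · rw [h]
    · exact h.1.le
  have hagφ : Filter.Tendsto (fun k => alpha (φ k) * gφ k) Filter.atTop (𝓝 0) :=
    hag.comp hφ.tendsto_atTop
  have hα0 : Filter.Tendsto (fun k => alpha (φ k)) Filter.atTop (𝓝 0) := by
    have hupper : Filter.Tendsto (fun k => (alpha (φ k) * gφ k) / b)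
        Filter.atTop (𝓝 0) := by
      simpa using hagφ.div_const b
    apply tendsto_of_tendsto_of_tendsto_of_le_of_le' tendsto_const_nhds hupper
    · exact Filter.Eventually.of_forall fun k => halpha_nonneg (φ k)
    · filter_upwards [hevg] with k hk
      have h1 : alpha (φ k) * gφ k ≤ alpha (φ k) * b :=
        mul_le_mul_of_nonneg_left hk.le (halpha_nonneg (φ k))
      have h2 : 0 ≤ (alpha (φ k) * gφ k - alpha (φ k) * b) / b :=
        div_nonneg_iff.2 (Or.inr ⟨by linarith, hb.le⟩)
      have h3 : (alpha (φ k) * gφ k - alpha (φ k) * b) / b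
          = (alpha (φ k) * gφ k) / b - alpha (φ k) := by
        rw [sub_div, mul_div_cancel_right₀ _ hb.ne]
      linarith [h3 ▸ h2]
  have hδpos : (0:ℝ) < delta := hdelta.1
  have hαM : ∀ᶠ k in Filter.atTop, alpha (φ k) < M / 2 :=
    hα0.eventually_lt_const (by linarith)
  have hsmall : Filter.Tendsto (fun k => L * (alpha (φ k) / delta) * B ^ 2 / 2)
      Filter.atTop (𝓝 0) := by
    have h1 := hα0.mul_const (L * B ^ 2 / (2 * delta))
    rw [zero_mul] at h1
    refine h1.congr fun k => ?_
    field_simp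
  have hpos2 : (0:ℝ) < (1 - gamma) * (-b) :=
    mul_pos (by linarith [hgamma.2]) (by linarith)
  have hsmallev : ∀ᶠ k in Filter.atTop,
      L * (alpha (φ k) / delta) * B ^ 2 / 2 < (1 - gamma) * (-b) :=
    hsmall.eventually_lt_const hpos2
  obtain ⟨k0, hk1, hk2, hk3, hk4⟩ := (hevg.and (heva.and (hαM.and hsmallev))).exists
  set K := φ k0 with hK
  have hgKb : gseq K < b := hk1
  have hgK : gseq K < 0 := lt_trans hgKb hb
  obtain ⟨⟨hαpos, hαle⟩, m, hm, harm, hfail⟩ := (hls K (hstat K)).1 hgK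
  have hαmaxpos : 0 < alphamax K := lt_of_lt_of_le hαpos hαle
  have hmne : m ≠ 0 := by
    intro h0
    rw [h0, pow_zero, one_mul] at hm
    rw [hm] at hk3
    linarith
  set β : ℝ := delta ^ (m - 1) * alphamax K with hβ
  have hβpos : 0 < β := mul_pos (pow_pos hδpos _) hαmaxpos
  have hβle : β ≤ alphamax K := by
    have h1 : delta ^ (m-1) ≤ 1 := pow_le_one₀ hδpos.le hdelta.2.le
    calc β ≤ 1 * alphamax K := by
          rw [hβ]; exact mul_le_mul_of_nonneg_right h1 hαmaxpos.le
      _ = alphamax K := one_mul _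
  have hβval : delta * β = alpha K := by
    have h5 : m - 1 + 1 = m := Nat.succ_pred_eq_of_ne_zero hmne
    rw [hβ, ← mul_assoc, ← pow_succ', h5, ← hm]
  have hfailm := hfail (m-1) (Nat.pred_lt hmne)
  push_neg at hfailm
  have hqmem : xt K + β • d K ∈ unitSimplex n :=
    step_mem (hxtfeas K) (hmax K (hstat K)) (Or.inr ⟨hβpos, hβle⟩)
  have hdl := descent_lemma hf hL0 hLip (hxtfeas K) hqmem
  have hq : ∀ j, (xt K + β • d K) j - xt K j = β * d K j := fun j => by
    simp [PiLp.add_apply, PiLp.smul_apply, smul_eq_mul]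
  have hqnorm : ‖(xt K + β • d K) - xt K‖ = β * ‖d K‖ := by
    rw [add_sub_cancel_left, norm_smul, Real.norm_eq_abs, abs_of_pos hβpos]
  have hsumq : (∑ j, gradient f (xt K) j * ((xt K + β • d K) j - xt K j))
      = β * gseq K := by
    calc (∑ j, gradient f (xt K) j * ((xt K + β • d K) j - xt K j))
        = ∑ j, gradient f (xt K) j * (β * d K j) :=
          Finset.sum_congr rfl fun j _ => by rw [hq j]
      _ = β * ∑ j, gradient f (xt K) j * d K j := by
          rw [Finset.mul_sum]
          exact Finset.sum_congr rfl fun j _ => by ring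
      _ = β * gseq K := rfl
  rw [hsumq, hqnorm] at hdl
  have hDB : ‖d K‖ ≤ B := hB k0
  have hfailm' : f (xt K) + gamma * β * gseq K < f (xt K + β • d K) := hfailm
  have hfinal1 : gamma * β * gseq K < β * gseq K + L / 2 * (β * ‖d K‖) ^ 2 := by
    linarith [hfailm'.trans_le hdl]
  have hC1 : (1 - gamma) * (-(gseq K)) < L / 2 * β * ‖d K‖ ^ 2 := by
    nlinarith [hfinal1, hβpos]
  have hC2 : L / 2 * β * ‖d K‖ ^ 2 ≤ L / 2 * β * B ^ 2 :=
    mul_le_mul_of_nonneg_left (pow_le_pow_left₀ (norm_nonneg _) hDB 2)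
      (by positivity)
  have hβeq : β = alpha K / delta := by
    rw [← hβval]
    field_simp
  have hmono2 : (1 - gamma) * (-b) ≤ (1 - gamma) * (-(gseq K)) :=
    mul_le_mul_of_nonneg_left (by linarith) (by linarith [hgamma.2])
  have hfin : L / 2 * β * B ^ 2 = L * (alpha K / delta) * B ^ 2 / 2 := by
    rw [hβeq]; ring
  linarith
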